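/- In the 3-stack word of any permutation, there is no factor BB, no factor CC, no factor BAB, and no factor of the form C B A^j C for any j ≥ 0. -/

import Mathlib

set_option linter.unusedVariables false

inductive Move | A | B | C | D
deriving DecidableEq, Repr

structure Config where
  input : List ℕ
  s1 : List ℕ
  s2 : List ℕ
  s3 : List ℕ
  out : List ℕ

def canA (c : Config) : Bool :=
  match c.input, c.s1 with
  | x :: _, [] => true
  | x :: _, t :: _ => decide (x < t)
  | [], _ => false

def canB (c : Config) : Bool :=
  match c.s1, c.s2 with
  | x :: _, [] => true
  | x :: _, t :: _ => decide (x < t)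
  | [], _ => false

def canC (c : Config) : Bool :=
  match c.s2, c.s3 with
  | x :: _, [] => true
  | x :: _, t :: _ => decide (x < t)
  | [], _ => false

def canD (c : Config) : Bool := !c.s3.isEmpty

def doA (c : Config) : Config :=
  { c with input := c.input.tail, s1 := c.input.headD 0 :: c.s1 }
def doB (c : Config) : Config :=
  { c with s1 := c.s1.tail, s2 := c.s1.headD 0 :: c.s2 }
def doC (c : Config) : Config :=
  { c with s2 := c.s2.tail, s3 := c.s2.headD 0 :: c.s3 }
def doD (c : Config) : Config :=
  { c with s3 := c.s3.tail, out := c.out ++ [c.s3.headD 0] }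

/-- One step of the greedy (priority `A > B > C > D`) 3-stack sorting algorithm:
`A` = input→S₁, `B` = S₁→S₂, `C` = S₂→S₃, `D` = S₃→output. -/
def step (c : Config) : Option (Move × Config) :=
  if canA c then some (.A, doA c)
  else if canB c then some (.B, doB c)
  else if canC c then some (.C, doC c)
  else if canD c then some (.D, doD c)
  else none

def runWord : ℕ → Config → List Move
  | 0, _ => []
  | fuel + 1, c =>
    match step c with
    | none => []
    | some (m, c') => m :: runWord fuel c'

def run : ℕ → Config → Config
  | 0, c => c
  | fuel + 1, c =>
    match step c with
    | none => c
    | some (_, c') => run fuel c'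

def initConfig (p : List ℕ) : Config := ⟨p, [], [], [], []⟩

/-- The 3-stack word of `p`: the sequence of moves of the greedy algorithm on `p`. -/
def stackWord (p : List ℕ) : List Move := runWord (4 * p.length) (initConfig p)

/-- The output of the greedy 3-stack sorting algorithm on `p`. -/
def output3 (p : List ℕ) : List ℕ := (run (4 * p.length) (initConfig p)).out

lemma step_some {c : Config} {m : Move} {c' : Config} (h : step c = some (m, c')) :
    (m = .A ∧ canA c = true ∧ c' = doA c) ∨
    (m = .B ∧ canA c = false ∧ canB c = true ∧ c' = doB c) ∨
    (m = .C ∧ canA c = false ∧ canB c = false ∧ canC c = true ∧ c' = doC c) ∨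
    (m = .D ∧ c' = doD c) := by
  unfold step at h
  split_ifs at h <;> simp_all

lemma step_A {c c' : Config} (h : step c = some (.A, c')) :
    canA c = true ∧ c' = doA c := by
  rcases step_some h with ⟨_,h1,h2⟩|⟨h,_⟩|⟨h,_⟩|⟨h,_⟩ <;> simp_all

lemma step_B {c c' : Config} (h : step c = some (.B, c')) :
    canA c = false ∧ canB c = true ∧ c' = doB c := by
  rcases step_some h with ⟨h,_⟩|⟨_,h1,h2,h3⟩|⟨h,_⟩|⟨h,_⟩ <;> simp_all

lemma step_C {c c' : Config} (h : step c = some (.C, c')) :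
    canA c = false ∧ canB c = false ∧ canC c = true ∧ c' = doC c := by
  rcases step_some h with ⟨h,_⟩|⟨h,_⟩|⟨_,h1,h2,h3,h4⟩|⟨h,_⟩ <;> simp_all

lemma runWord_cons {fuel : ℕ} {c : Config} {m : Move} {w : List Move}
    (h : runWord fuel c = m :: w) :
    ∃ f c', fuel = f + 1 ∧ step c = some (m, c') ∧ w = runWord f c' := by
  cases fuel with
  | zero => simp [runWord] at h
  | succ f =>
    unfold runWord at h
    rcases hs : step c with _ | ⟨m', c'⟩ <;> rw [hs] at h
    · simp at h
    · simp at h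
      obtain ⟨rfl, h2⟩ := h
      exact ⟨f, c', rfl, rfl, h2.symm⟩

def StkInv (c : Config) : Prop := c.s1.Pairwise (· < ·) ∧ c.s2.Pairwise (· < ·)

lemma sorted_push {x : ℕ} {l : List ℕ} (hl : l.Pairwise (· < ·))
    (h : ∀ t r, l = t :: r → x < t) : (x :: l).Pairwise (· < ·) := by
  cases l with
  | nil => simp
  | cons t r =>
    have hxt := h t r rfl
    rw [List.pairwise_cons]
    exact ⟨fun b hb => by
      rcases List.mem_cons.mp hb with rfl | hb
      · exact hxt
      · exact lt_trans hxt (List.rel_of_pairwise_cons hl hb), hl⟩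

lemma inv_step {c c' : Config} {m : Move} (h : step c = some (m, c')) (hi : StkInv c) :
    StkInv c' := by
  rcases step_some h with ⟨_,h1,h2⟩|⟨_,h1,h2,h3⟩|⟨_,h1,h2,h3,h4⟩|⟨_,h2⟩
  · -- A
    subst h2
    unfold canA at h1
    rcases hin : c.input with _ | ⟨x, inp⟩ <;> rw [hin] at h1
    · simp at h1
    · refine ⟨?_, hi.2⟩
      simp only [doA, hin, List.headD]
      exact sorted_push hi.1 (fun t r htr => by
        rw [htr] at h1; simpa using h1)
  · -- B
    subst h3
    unfold canB at h2
    rcases hs1 : c.s1 with _ | ⟨x, r⟩ <;> rw [hs1] at h2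
    · simp at h2
    · refine ⟨?_, ?_⟩
      · have h1 := hi.1
        rw [hs1] at h1
        simpa [doB, hs1] using h1.of_cons
      · simp only [doB, hs1, List.headD]
        exact sorted_push hi.2 (fun t u htu => by
          rw [htu] at h2; simpa using h2)
  · -- C
    subst h4
    exact ⟨hi.1, by simpa [doC] using hi.2.tail⟩
  · -- D
    subst h2
    exact ⟨hi.1, hi.2⟩

lemma noAC : ∀ (j fuel : ℕ) (c : Config) (rest : List Move) (a b : ℕ) (u v : List ℕ),
    c.s2 = a :: u → c.s3 = b :: v → ¬ a < b →
    runWord fuel c ≠ List.replicate j Move.A ++ Move.C :: rest := by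
  intro j
  induction j with
  | zero =>
    intro fuel c rest a b u v h2 h3 hab h
    simp only [List.replicate, List.nil_append] at h
    obtain ⟨f, c', _, hs, _⟩ := runWord_cons h
    have := (step_C hs).2.2.1
    unfold canC at this
    rw [h2, h3] at this
    simp at this
    exact hab this
  | succ j ih =>
    intro fuel c rest a b u v h2 h3 hab h
    rw [List.replicate_succ, List.cons_append] at h
    obtain ⟨f, c', _, hs, hw⟩ := runWord_cons h
    obtain ⟨_, hc'⟩ := step_A hs
    exact ih f c' rest a b u v (by rw [hc']; exact h2) (by rw [hc']; exact h3) hab hw.symm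

lemma noBB : ∀ (fuel : ℕ) (c : Config), StkInv c →
    ¬ ([Move.B, Move.B] <:+: runWord fuel c) := by
  intro fuel
  induction fuel with
  | zero => intro c _ h; simp [runWord] at h
  | succ f ih =>
    intro c hi h
    rcases hw : runWord (f + 1) c with _ | ⟨m, w⟩
    · rw [hw] at h; simp at h
    · rw [hw] at h
      obtain ⟨f', c', hf, hs, hww⟩ := runWord_cons hw
      rw [List.infix_cons_iff] at h
      rcases h with h | h
      · -- prefix: m = B, w starts with B
        obtain ⟨t, ht⟩ := h
        simp only [List.cons_append] at ht
        obtain ⟨hm, hwt⟩ := List.cons.inj ht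
        subst hm
        have hB2 : runWord f' c' = Move.B :: t := by rw [← hww, ← hwt]; simp
        obtain ⟨hA, hB, hc'⟩ := step_B hs
        obtain ⟨f2, c2, _, hs2, _⟩ := runWord_cons hB2
        obtain ⟨_, hB', _⟩ := step_B hs2
        -- canB c' must fail: c'.s1 = tail, sorted
        unfold canB at hB
        rcases hs1 : c.s1 with _ | ⟨x, r⟩ <;> rw [hs1] at hB
        · simp at hB
        · unfold canB at hB'
          rw [hc'] at hB'
          simp only [doB, hs1, List.tail, List.headD] at hB'
          rcases hr : r with _ | ⟨y, r'⟩ <;> rw [hr] at hB'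
          · simp at hB'
          · simp only [decide_eq_true_eq] at hB'
            have : x < y := by
              have := hi.1; rw [hs1, hr] at this
              exact List.rel_of_pairwise_cons this (by simp)
            omega
      · injection hf with hf; subst hf
        exact ih c' (inv_step hs hi) (hww ▸ h)

lemma noCC : ∀ (fuel : ℕ) (c : Config), StkInv c →
    ¬ ([Move.C, Move.C] <:+: runWord fuel c) := by
  intro fuel
  induction fuel with
  | zero => intro c _ h; simp [runWord] at h
  | succ f ih =>
    intro c hi h
    rcases hw : runWord (f + 1) c with _ | ⟨m, w⟩
    · rw [hw] at h; simp at h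
    · rw [hw] at h
      obtain ⟨f', c', hf, hs, hww⟩ := runWord_cons hw
      rw [List.infix_cons_iff] at h
      rcases h with h | h
      · obtain ⟨t, ht⟩ := h
        simp only [List.cons_append] at ht
        obtain ⟨hm, hwt⟩ := List.cons.inj ht
        subst hm
        have hC2 : runWord f' c' = Move.C :: t := by rw [← hww, ← hwt]; simp
        obtain ⟨_, _, hC, hc'⟩ := step_C hs
        obtain ⟨f2, c2, _, hs2, _⟩ := runWord_cons hC2
        obtain ⟨_, _, hC', _⟩ := step_C hs2
        unfold canC at hC
        rcases hs2' : c.s2 with _ | ⟨x, r⟩ <;> rw [hs2'] at hC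
        · simp at hC
        · unfold canC at hC'
          rw [hc'] at hC'
          simp only [doC, hs2', List.tail, List.headD] at hC'
          rcases hr : r with _ | ⟨y, r'⟩ <;> rw [hr] at hC'
          · simp at hC'
          · simp only [decide_eq_true_eq] at hC'
            have : x < y := by
              have := hi.2; rw [hs2', hr] at this
              exact List.rel_of_pairwise_cons this (by simp)
            omega
      · injection hf with hf; subst hf
        exact ih c' (inv_step hs hi) (hww ▸ h)

lemma noBAB : ∀ (fuel : ℕ) (c : Config), StkInv c →
    ¬ ([Move.B, Move.A, Move.B] <:+: runWord fuel c) := by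
  intro fuel
  induction fuel with
  | zero => intro c _ h; simp [runWord] at h
  | succ f ih =>
    intro c hi h
    rcases hw : runWord (f + 1) c with _ | ⟨m, w⟩
    · rw [hw] at h; simp at h
    · rw [hw] at h
      obtain ⟨f', c', hf, hs, hww⟩ := runWord_cons hw
      rw [List.infix_cons_iff] at h
      rcases h with h | h
      · obtain ⟨t, ht⟩ := h
        simp only [List.cons_append] at ht
        obtain ⟨hm, hwt⟩ := List.cons.inj ht
        subst hm
        -- w = A :: B :: t
        have hA1 : runWord f' c' = Move.A :: Move.B :: t := by rw [← hww, ← hwt]; simp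
        obtain ⟨hnA, hB, hc1⟩ := step_B hs
        obtain ⟨f1, c1, _, hs1, hw1⟩ := runWord_cons hA1
        obtain ⟨hcanA, hc2⟩ := step_A hs1
        have hw2' : runWord f1 c1 = Move.B :: t := hw1.symm
        obtain ⟨f2, c2, _, hs2, _⟩ := runWord_cons hw2'
        obtain ⟨_, hB2, _⟩ := step_B hs2
        -- derive contradiction
        unfold canB at hB
        rcases hS1 : c.s1 with _ | ⟨tt, r⟩ <;> rw [hS1] at hB
        · simp at hB
        · -- ¬ canA c, input nonempty (since canA c')
          unfold canA at hcanA
          rw [hc1] at hcanA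
          simp only [doB] at hcanA
          rcases hin : c.input with _ | ⟨x, inp⟩ <;> rw [hin] at hcanA
          · simp at hcanA
          · unfold canA at hnA
            rw [hin, hS1] at hnA
            simp only [decide_eq_false_iff_not, not_lt] at hnA
            -- canB c2: c2.s1 = x :: (doB c).s1, c2.s2 = tt :: c.s2
            unfold canB at hB2
            rw [hc2, hc1] at hB2
            simp only [doA, doB, hin, hS1, List.headD] at hB2
            simp only [decide_eq_true_eq] at hB2
            omega
      · injection hf with hf; subst hf
        exact ih c' (inv_step hs hi) (hww ▸ h)

lemma noCBAC : ∀ (fuel : ℕ) (c : Config), StkInv c → ∀ (j : ℕ),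
    ¬ (([Move.C, Move.B] ++ List.replicate j Move.A ++ [Move.C]) <:+: runWord fuel c) := by
  intro fuel
  induction fuel with
  | zero => intro c _ j h; simp [runWord] at h
  | succ f ih =>
    intro c hi j h
    rcases hw : runWord (f + 1) c with _ | ⟨m, w⟩
    · rw [hw] at h; simp at h
    · rw [hw] at h
      obtain ⟨f', c', hf, hs, hww⟩ := runWord_cons hw
      rw [List.infix_cons_iff] at h
      rcases h with h | h
      · obtain ⟨t, ht⟩ := h
        simp only [List.cons_append, List.append_assoc] at ht
        obtain ⟨hm, hwt⟩ := List.cons.inj ht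
        subst hm
        -- w = B :: (replicate j A ++ [C] ++ t)
        obtain ⟨_, _, hC, hc1⟩ := step_C hs
        have hB1 : runWord f' c' = Move.B :: (List.replicate j Move.A ++ Move.C :: t) := by
          rw [← hww, ← hwt]; simp
        obtain ⟨f1, c1, _, hs1, hw1⟩ := runWord_cons hB1
        obtain ⟨_, hcanB1, hc2⟩ := step_B hs1
        -- c.s2 = t2 :: r2 from canC c
        unfold canC at hC
        rcases hS2 : c.s2 with _ | ⟨t2, r2⟩ <;> rw [hS2] at hC
        · simp at hC
        · -- ¬ canB c but c.s1 nonempty (canB c1, s1 unchanged by doC)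
          have hnB := (step_C hs).2.1
          unfold canB at hcanB1
          rw [hc1] at hcanB1
          simp only [doC] at hcanB1
          rcases hS1 : c.s1 with _ | ⟨t1, r1⟩ <;> rw [hS1] at hcanB1
          · simp at hcanB1
          · unfold canB at hnB
            rw [hS1, hS2] at hnB
            simp only [decide_eq_false_iff_not, not_lt] at hnB
            -- c2 = doB c1 : s2 = t1 :: r2, s3 = t2 :: c.s3
            have hs2 : c1.s2 = t1 :: c.s2.tail := by
              rw [hc2, hc1]; simp [doB, doC, hS1]
            have hs3 : c1.s3 = t2 :: c.s3 := by
              rw [hc2, hc1]; simp [doB, doC, hS2]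
            exact noAC j f1 c1 t t1 t2 _ _ hs2 hs3 (by omega) hw1.symm
      · injection hf with hf; subst hf
        exact ih c' (inv_step hs hi) j (hww ▸ h)

/-- In the 3-stack word of any permutation there is no factor `BB`, no factor
`CC`, no factor `BAB`, and no factor `C B Aʲ C` for any `j ≥ 0`. -/
theorem stmt_18 (n : ℕ) (p : List ℕ) (hp : p.Perm (List.range' 1 n)) :
    ¬ ([Move.B, Move.B] <:+: stackWord p) ∧
    ¬ ([Move.C, Move.C] <:+: stackWord p) ∧
    ¬ ([Move.B, Move.A, Move.B] <:+: stackWord p) ∧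
    ∀ j : ℕ, ¬ (([Move.C, Move.B] ++ List.replicate j Move.A ++ [Move.C])
        <:+: stackWord p) := by
  have hi : StkInv (initConfig p) := ⟨List.Pairwise.nil, List.Pairwise.nil⟩
  exact ⟨noBB _ _ hi, noCC _ _ hi, noBAB _ _ hi, noCBAC _ _ hi⟩
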